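/- arXiv:1710.06532 — 2 statements merged into one kernel-verified Lean document; each statement's English description precedes it below -/
import Mathlib

section
/- Let μ be a finite positive Borel measure on 𝕋 whose support contains at least N+1 distinct points, and let Φ_N be the monic orthogonal polynomial of degree N for μ. Let M_z be the multiplication-by-z operator on L²(μ) and π_N the orthogonal projection onto span{1, z, …, z^{N-1}}. Then Φ_N is the characteristic polynomial of the finite truncation π_N M_z π_N restricted to span{1, z, …, z^{N-1}}. -/
open MeasureTheory Complex Polynomial

noncomputable instance : MeasurableSpace Circle := borel Circle
instance : BorelSpace Circle := ⟨rfl⟩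

lemma circle_coe_continuous : Continuous (fun z : Circle => (z : ℂ)) := continuous_subtype_val

lemma cont_integrable {E : Type*} [NormedAddCommGroup E] (μ : Measure Circle) [IsFiniteMeasure μ]
    {f : Circle → E} (hf : Continuous f) : Integrable f μ :=
  hf.integrable_of_hasCompactSupport (HasCompactSupport.of_compactSpace f)

lemma key_indep (μ : Measure Circle) [IsFiniteMeasure μ] (N : ℕ)
    (hsupp : ∃ S : Finset Circle, N + 1 ≤ S.card ∧
      ∀ z ∈ S, ∀ ε : ℝ, 0 < ε → 0 < μ (Metric.ball z ε))
    (c : Fin N → ℂ)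
    (h : ∀ m : Fin N, ∫ z : Circle,
      (∑ j : Fin N, c j * (z : ℂ) ^ (j : ℕ)) * (starRingEnd ℂ) ((z : ℂ) ^ (m : ℕ)) ∂μ = 0) :
    ∀ j, c j = 0 := by
  obtain ⟨S, hcard, hS⟩ := hsupp
  set f : Circle → ℂ := fun z => ∑ j : Fin N, c j * (z : ℂ) ^ (j : ℕ) with hfdef
  have hfc : Continuous f :=
    continuous_finset_sum _ fun j _ => continuous_const.mul (circle_coe_continuous.pow _)
  have h2 : ∫ z : Circle, f z * (starRingEnd ℂ) (f z) ∂μ = 0 := by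
    have expand : ∀ z : Circle, f z * (starRingEnd ℂ) (f z) =
        ∑ m : Fin N, (starRingEnd ℂ) (c m) * (f z * (starRingEnd ℂ) ((z : ℂ) ^ (m : ℕ))) := by
      intro z
      rw [hfdef]
      simp only [map_sum, map_mul, Finset.mul_sum]
      exact Finset.sum_congr rfl fun m _ => by ring
    simp_rw [expand]
    rw [integral_finset_sum]
    · refine Finset.sum_eq_zero fun m _ => ?_
      rw [MeasureTheory.integral_const_mul, h m, mul_zero]
    · intro m _
      exact cont_integrable μ (continuous_const.mul (hfc.mul
        (Complex.continuous_conj.comp (circle_coe_continuous.pow _))))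
  have h3 : ∫ z : Circle, Complex.normSq (f z) ∂μ = 0 := by
    have : ∫ z : Circle, ((Complex.normSq (f z) : ℝ) : ℂ) ∂μ = 0 := by
      simpa [Complex.mul_conj] using h2
    have hcast : ∫ z : Circle, ((Complex.normSq (f z) : ℝ) : ℂ) ∂μ =
        ∫ z : Circle, (RCLike.ofReal (Complex.normSq (f z)) : ℂ) ∂μ := rfl
    rw [hcast, integral_ofReal] at this
    exact RCLike.ofReal_eq_zero.mp this
  have h4 : (fun z : Circle => Complex.normSq (f z)) =ᵐ[μ] 0 := by
    rw [← MeasureTheory.integral_eq_zero_iff_of_nonneg (fun z => Complex.normSq_nonneg _)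
      (cont_integrable μ (Complex.continuous_normSq.comp hfc))]
    exact h3
  have h4' : ∀ᵐ z : Circle ∂μ, f z = 0 := by
    filter_upwards [h4] with z hz
    exact Complex.normSq_eq_zero.mp (by simpa using hz)
  have h5 : ∀ z ∈ S, f z = 0 := by
    intro z₀ hz₀
    by_contra hne
    have hopen : IsOpen {z : Circle | f z ≠ 0} :=
      (isOpen_compl_singleton).preimage hfc
    obtain ⟨ε, hε, hball⟩ := Metric.isOpen_iff.mp hopen z₀ hne
    have hμ0 : μ {z : Circle | f z ≠ 0} = 0 := by
      have := h4'
      rw [MeasureTheory.ae_iff] at this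
      exact this
    have : μ (Metric.ball z₀ ε) = 0 :=
      le_antisymm ((measure_mono hball).trans hμ0.le) zero_le
    exact (hS z₀ hz₀ ε hε).ne' this
  -- polynomial vanishing
  have hP : (∑ j : Fin N, Polynomial.C (c j) * Polynomial.X ^ (j : ℕ) : Polynomial ℂ) = 0 := by
    apply Polynomial.eq_zero_of_natDegree_lt_card_of_eval_eq_zero' _
      (S.image (fun z : Circle => (z : ℂ)))
    · intro x hx
      obtain ⟨z, hz, rfl⟩ := Finset.mem_image.mp hx
      have := h5 z hz
      simpa [hfdef, Polynomial.eval_finset_sum] using this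
    · rw [Finset.card_image_of_injective _ (f := fun z : Circle => (z : ℂ)) Circle.coe_injective]
      have : (∑ j : Fin N, Polynomial.C (c j) * Polynomial.X ^ (j : ℕ) : Polynomial ℂ).natDegree
          ≤ N := by
        apply Polynomial.natDegree_sum_le_of_forall_le
        intro j _
        exact (Polynomial.natDegree_C_mul_X_pow_le _ _).trans (le_of_lt j.isLt)
      omega
  intro j
  have := congrArg (fun p : Polynomial ℂ => p.coeff (j : ℕ)) hP
  simp only [Polynomial.finset_sum_coeff, Polynomial.coeff_C_mul, Polynomial.coeff_X_pow,
    Polynomial.coeff_zero, mul_ite, mul_one, mul_zero] at this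
  rw [Finset.sum_eq_single j (fun b _ hb => if_neg fun hh => hb (Fin.val_injective hh.symm))
    (fun hj => absurd (Finset.mem_univ j) hj), if_pos rfl] at this
  exact this

/-- Let `μ` be a finite positive measure on the circle whose support contains
at least `N+1` points, `Φ_N` its monic orthogonal polynomial of degree `N`, and `A` the matrix
of the truncation `π_N M_z π_N` of multiplication by `z` in the basis `1, z, …, z^{N-1}`
(characterized by `z·z^l − Σ_j A_{j,l} z^j ⟂ z^m` in `L²(μ)` for all `m < N`). Then `Φ_N` is
the characteristic polynomial of `A`. -/
theorem monic_orthogonal_poly_eq_charpoly_truncation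
    (μ : Measure Circle) [IsFiniteMeasure μ] (N : ℕ)
    (hsupp : ∃ S : Finset Circle, N + 1 ≤ S.card ∧
      ∀ z ∈ S, ∀ ε : ℝ, 0 < ε → 0 < μ (Metric.ball z ε))
    (Φ : Polynomial ℂ) (hmonic : Φ.Monic) (hdeg : Φ.natDegree = N)
    (horth : ∀ Q : Polynomial ℂ, Q.degree < (N : ℕ) →
      ∫ z : Circle, Φ.eval (z : ℂ) * (starRingEnd ℂ) (Q.eval (z : ℂ)) ∂μ = 0)
    (A : Matrix (Fin N) (Fin N) ℂ)
    (hA : ∀ l m : Fin N,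
      ∫ z : Circle, ((z : ℂ) ^ ((l : ℕ) + 1) - ∑ j : Fin N, A j l * (z : ℂ) ^ (j : ℕ)) *
        (starRingEnd ℂ) ((z : ℂ) ^ (m : ℕ)) ∂μ = 0) :
    A.charpoly = Φ := by
  classical
  have hΦ0 : Φ ≠ 0 := hmonic.ne_zero
  set pb := AdjoinRoot.powerBasis hΦ0 with hpb
  have hdim : pb.dim = N := by rw [hpb, AdjoinRoot.powerBasis_dim, hdeg]
  let e : Fin pb.dim ≃ Fin N := finCongr hdim
  have hecoe : ∀ j : Fin N, ((e.symm j : Fin pb.dim) : ℕ) = (j : ℕ) := by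
    intro j; simp [e]
  set B : Matrix (Fin N) (Fin N) ℂ :=
    (Matrix.reindex e e) (Algebra.leftMulMatrix pb.basis pb.gen) with hBdef
  have hchar : B.charpoly = Φ := by
    rw [hBdef, Matrix.charpoly_reindex, charpoly_leftMulMatrix,
      AdjoinRoot.minpoly_powerBasis_gen_of_monic hmonic]
  have hgen : pb.gen = AdjoinRoot.root Φ := AdjoinRoot.powerBasis_gen hΦ0
  set Q : Fin N → Polynomial ℂ := fun l =>
    X ^ ((l : ℕ) + 1) - ∑ j : Fin N, C (B j l) * X ^ (j : ℕ) with hQdef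
  have hsum : ∀ l : Fin N, ∑ j : Fin N, B j l • pb.gen ^ (j : ℕ) =
      pb.gen * pb.gen ^ (l : ℕ) := by
    intro l
    have hB : ∀ j : Fin N, B j l =
        pb.basis.repr (pb.gen * pb.gen ^ (l : ℕ)) (e.symm j) := by
      intro j
      rw [hBdef]
      simp only [Matrix.reindex_apply, Matrix.submatrix_apply,
        Algebra.leftMulMatrix_eq_repr_mul, pb.basis_eq_pow, hecoe]
    calc ∑ j : Fin N, B j l • pb.gen ^ (j : ℕ)
        = ∑ i : Fin pb.dim, pb.basis.repr (pb.gen * pb.gen ^ (l : ℕ)) i • pb.gen ^ (i : ℕ) := by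
          refine Fintype.sum_equiv e.symm _ _ fun j => ?_
          rw [hB j, hecoe]
      _ = ∑ i : Fin pb.dim, pb.basis.repr (pb.gen * pb.gen ^ (l : ℕ)) i • pb.basis i := by
          refine Finset.sum_congr rfl fun i _ => ?_
          rw [pb.basis_eq_pow]
      _ = pb.gen * pb.gen ^ (l : ℕ) := pb.basis.sum_repr _
  have hQval : ∀ l : Fin N, Q l = if (l : ℕ) + 1 = N then Φ else 0 := by
    intro l
    have hdvd : Φ ∣ Q l := by
      have haev : Polynomial.aeval pb.gen (Q l) = 0 := by
        rw [hQdef]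
        simp only [map_sub, map_pow, map_sum, map_mul, Polynomial.aeval_X, Polynomial.aeval_C,
          ← Algebra.smul_def]
        rw [hsum l, ← pow_succ']
        exact sub_self _
      rwa [hgen, AdjoinRoot.aeval_eq, AdjoinRoot.mk_eq_zero] at haev
    have hdvd' : Φ ∣ (Q l - if (l : ℕ) + 1 = N then Φ else 0) := by
      refine dvd_sub hdvd ?_
      split
      · exact dvd_refl _
      · exact dvd_zero _
    have hdegΦ : Φ.degree = (N : ℕ) := by
      rw [Polynomial.degree_eq_natDegree hΦ0, hdeg]
    have hdegsum : (∑ j : Fin N, C (B j l) * X ^ (j : ℕ) : Polynomial ℂ).degree < (N : ℕ) := by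
      refine lt_of_le_of_lt (Polynomial.degree_sum_le _ _) ?_
      rw [Finset.sup_lt_iff (by exact_mod_cast WithBot.bot_lt_coe N)]
      intro j _
      exact lt_of_le_of_lt (Polynomial.degree_C_mul_X_pow_le _ _) (by exact_mod_cast j.isLt)
    have hdeglt : (Q l - if (l : ℕ) + 1 = N then Φ else 0).degree < Φ.degree := by
      rw [hdegΦ]
      by_cases hc : (l : ℕ) + 1 = N
      · rw [if_pos hc, hQdef]
        have heq : (X : Polynomial ℂ) ^ ((l : ℕ) + 1) - (∑ j : Fin N, C (B j l) * X ^ (j : ℕ))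
            - Φ = ((X : Polynomial ℂ) ^ ((l : ℕ) + 1) - Φ)
              - (∑ j : Fin N, C (B j l) * X ^ (j : ℕ)) := by ring
        rw [heq]
        refine lt_of_le_of_lt (Polynomial.degree_sub_le _ _) (max_lt ?_ hdegsum)
        have h1 := Polynomial.degree_sub_lt (p := (X : Polynomial ℂ) ^ ((l : ℕ) + 1)) (q := Φ)
          (by rw [Polynomial.degree_X_pow, hdegΦ, hc]) (pow_ne_zero _ Polynomial.X_ne_zero)
          (by rw [Polynomial.leadingCoeff_X_pow, hmonic.leadingCoeff])
        rw [Polynomial.degree_X_pow] at h1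
        exact h1.trans_le (le_of_eq (by rw [hc]))
      · rw [if_neg hc, sub_zero, hQdef]
        have hl : (l : ℕ) + 1 < N := lt_of_le_of_ne l.isLt hc
        refine lt_of_le_of_lt (Polynomial.degree_sub_le _ _) (max_lt ?_ hdegsum)
        rw [Polynomial.degree_X_pow]
        exact_mod_cast hl
    exact sub_eq_zero.mp (Polynomial.eq_zero_of_dvd_of_degree_lt hdvd' hdeglt)
  have hBorth : ∀ l m : Fin N,
      ∫ z : Circle, ((z : ℂ) ^ ((l : ℕ) + 1) - ∑ j : Fin N, B j l * (z : ℂ) ^ (j : ℕ)) *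
        (starRingEnd ℂ) ((z : ℂ) ^ (m : ℕ)) ∂μ = 0 := by
    intro l m
    have heval : ∀ z : Circle,
        ((z : ℂ) ^ ((l : ℕ) + 1) - ∑ j : Fin N, B j l * (z : ℂ) ^ (j : ℕ)) =
          (Q l).eval (z : ℂ) := by
      intro z
      rw [hQdef]
      simp [Polynomial.eval_finset_sum]
    simp_rw [heval, hQval l]
    by_cases hc : (l : ℕ) + 1 = N
    · rw [if_pos hc]
      have := horth (X ^ (m : ℕ))
        (by rw [Polynomial.degree_X_pow]; exact_mod_cast m.isLt)
      simpa using this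
    · rw [if_neg hc]
      simp
  have hAB : A = B := by
    ext j l
    have hkey : ∀ i : Fin N, B i l - A i l = 0 := by
      refine key_indep μ N hsupp (fun i => B i l - A i l) ?_
      intro m
      have hfeq : (fun z : Circle =>
          (∑ i : Fin N, (B i l - A i l) * (z : ℂ) ^ (i : ℕ)) *
            (starRingEnd ℂ) ((z : ℂ) ^ (m : ℕ))) =
          fun z : Circle =>
            (((z : ℂ) ^ ((l : ℕ) + 1) - ∑ i : Fin N, A i l * (z : ℂ) ^ (i : ℕ)) *
              (starRingEnd ℂ) ((z : ℂ) ^ (m : ℕ))) -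
            (((z : ℂ) ^ ((l : ℕ) + 1) - ∑ i : Fin N, B i l * (z : ℂ) ^ (i : ℕ)) *
              (starRingEnd ℂ) ((z : ℂ) ^ (m : ℕ))) := by
        funext z
        simp only [sub_mul]
        rw [Finset.sum_sub_distrib]
        ring
      have hcA : Continuous fun z : Circle =>
          (((z : ℂ) ^ ((l : ℕ) + 1) - ∑ i : Fin N, A i l * (z : ℂ) ^ (i : ℕ)) *
            (starRingEnd ℂ) ((z : ℂ) ^ (m : ℕ))) :=
        (((circle_coe_continuous.pow _).sub
          (continuous_finset_sum _ fun i _ =>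
            continuous_const.mul (circle_coe_continuous.pow _))).mul
          (Complex.continuous_conj.comp (circle_coe_continuous.pow _)))
      have hcB : Continuous fun z : Circle =>
          (((z : ℂ) ^ ((l : ℕ) + 1) - ∑ i : Fin N, B i l * (z : ℂ) ^ (i : ℕ)) *
            (starRingEnd ℂ) ((z : ℂ) ^ (m : ℕ))) :=
        (((circle_coe_continuous.pow _).sub
          (continuous_finset_sum _ fun i _ =>
            continuous_const.mul (circle_coe_continuous.pow _))).mul
          (Complex.continuous_conj.comp (circle_coe_continuous.pow _)))
      rw [hfeq, integral_sub (cont_integrable μ hcA) (cont_integrable μ hcB), hA l m,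
        hBorth l m, sub_zero]
    have := hkey j
    rw [sub_eq_zero] at this
    exact this.symm
  rw [hAB]
  exact hchar
end

section
/- Let μ be a finite positive Borel measure on the unit circle 𝕋 whose support is infinite. Then all zeros of every monic orthogonal polynomial Φ_N for μ lie strictly inside the open unit disc {z ∈ ℂ : |z| < 1}. -/
open MeasureTheory Complex

open Polynomial in
/-- For a finite positive measure `μ` on the unit circle with infinite
support, every zero of every monic orthogonal polynomial `Φ_N` for `μ` lies strictly inside
the open unit disc. -/
theorem opuc_zeros_in_open_disc
    (μ : Measure Circle) [IsFiniteMeasure μ]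
    (hsupp : {z : Circle | ∀ ε : ℝ, 0 < ε → 0 < μ (Metric.ball z ε)}.Infinite)
    (N : ℕ) (Φ : Polynomial ℂ) (hmonic : Φ.Monic) (hdeg : Φ.natDegree = N)
    (horth : ∀ Q : Polynomial ℂ, Q.degree < (N : ℕ) →
      ∫ z : Circle, Φ.eval (z : ℂ) * (starRingEnd ℂ) (Q.eval (z : ℂ)) ∂μ = 0) :
    ∀ z : ℂ, Φ.IsRoot z → ‖z‖ < 1 := by
  intro z₀ hroot
  have hΦ0 : Φ ≠ 0 := hmonic.ne_zero
  -- continuity / integrability of polynomial evaluations on the circle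
  have hc : ∀ p : Polynomial ℂ, Continuous fun w : Circle => p.eval (w : ℂ) :=
    fun p => p.continuous.comp continuous_subtype_val
  have hint : ∀ f : Circle → ℂ, Continuous f → Integrable f μ := fun f hf =>
    hf.integrable_of_hasCompactSupport (HasCompactSupport.of_compactSpace f)
  have hintR : ∀ f : Circle → ℝ, Continuous f → Integrable f μ := fun f hf =>
    hf.integrable_of_hasCompactSupport (HasCompactSupport.of_compactSpace f)
  -- N is positive
  have hN : 0 < N := by
    rcases Nat.eq_zero_or_pos N with h0 | h
    · exfalso
      have h1 : Φ = 1 := hmonic.natDegree_eq_zero.mp (hdeg.trans h0)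
      rw [h1] at hroot
      simp [Polynomial.IsRoot] at hroot
    · exact h
  -- factor out the root
  set Q : Polynomial ℂ := Φ /ₘ (X - C z₀) with hQdef
  have hfac : (X - C z₀) * Q = Φ := (mul_divByMonic_eq_iff_isRoot).mpr hroot
  have hΦdeg : Φ.degree = (N : WithBot ℕ) := by
    rw [Polynomial.degree_eq_natDegree hΦ0, hdeg]
  have hQdeg : Q.degree < (N : ℕ) := by
    have := Polynomial.degree_divByMonic_lt Φ (X - C z₀) hΦ0
      (by simp [degree_X_sub_C])
    rwa [hΦdeg] at this
  -- pointwise identity on the circle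
  have hpt : ∀ z : Circle,
      Q.eval (z : ℂ) * (starRingEnd ℂ) (Q.eval (z : ℂ)) =
        Φ.eval (z : ℂ) * (starRingEnd ℂ) (Φ.eval (z : ℂ))
        + (starRingEnd ℂ) z₀ * (Φ.eval (z : ℂ) * (starRingEnd ℂ) (Q.eval (z : ℂ)))
        + z₀ * ((starRingEnd ℂ) (Φ.eval (z : ℂ) * (starRingEnd ℂ) (Q.eval (z : ℂ))))
        + (z₀ * (starRingEnd ℂ) z₀) * (Q.eval (z : ℂ) * (starRingEnd ℂ) (Q.eval (z : ℂ))) := by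
    intro z
    have hz : (z : ℂ) * (starRingEnd ℂ) (z : ℂ) = 1 := by
      simp [Complex.mul_conj]
    have hΦz : Φ.eval (z : ℂ) = ((z : ℂ) - z₀) * Q.eval (z : ℂ) := by
      conv_lhs => rw [← hfac]
      simp
    have hΦz' : (starRingEnd ℂ) (Φ.eval (z : ℂ)) =
        ((starRingEnd ℂ) (z : ℂ) - (starRingEnd ℂ) z₀) * (starRingEnd ℂ) (Q.eval (z : ℂ)) := by
      rw [hΦz, map_mul, map_sub]
    rw [hΦz]
    simp only [map_mul, map_sub, Complex.conj_conj]
    linear_combination (-(Q.eval (z : ℂ) * (starRingEnd ℂ) (Q.eval (z : ℂ)))) * hz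
  -- integrability of all the terms
  have hcconj : ∀ p : Polynomial ℂ, Continuous fun w : Circle => (starRingEnd ℂ) (p.eval (w : ℂ)) :=
    fun p => continuous_star.comp (hc p)
  have hQQ : Integrable (fun z : Circle => Q.eval (z : ℂ) * (starRingEnd ℂ) (Q.eval (z : ℂ))) μ :=
    hint _ ((hc Q).mul (hcconj Q))
  have hΦΦ : Integrable (fun z : Circle => Φ.eval (z : ℂ) * (starRingEnd ℂ) (Φ.eval (z : ℂ))) μ :=
    hint _ ((hc Φ).mul (hcconj Φ))
  have hΦQ : Integrable (fun z : Circle => Φ.eval (z : ℂ) * (starRingEnd ℂ) (Q.eval (z : ℂ))) μ :=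
    hint _ ((hc Φ).mul (hcconj Q))
  -- integrate the pointwise identity
  have horthQ := horth Q hQdeg
  have hmain : ∫ z : Circle, Q.eval (z : ℂ) * (starRingEnd ℂ) (Q.eval (z : ℂ)) ∂μ =
      (∫ z : Circle, Φ.eval (z : ℂ) * (starRingEnd ℂ) (Φ.eval (z : ℂ)) ∂μ)
      + (z₀ * (starRingEnd ℂ) z₀) *
        ∫ z : Circle, Q.eval (z : ℂ) * (starRingEnd ℂ) (Q.eval (z : ℂ)) ∂μ := by
    have step1 : ∫ z : Circle, Q.eval (z : ℂ) * (starRingEnd ℂ) (Q.eval (z : ℂ)) ∂μ =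
        ∫ z : Circle, (Φ.eval (z : ℂ) * (starRingEnd ℂ) (Φ.eval (z : ℂ))
          + (starRingEnd ℂ) z₀ * (Φ.eval (z : ℂ) * (starRingEnd ℂ) (Q.eval (z : ℂ)))
          + z₀ * ((starRingEnd ℂ) (Φ.eval (z : ℂ) * (starRingEnd ℂ) (Q.eval (z : ℂ))))
          + (z₀ * (starRingEnd ℂ) z₀) * (Q.eval (z : ℂ) * (starRingEnd ℂ) (Q.eval (z : ℂ)))) ∂μ :=
      integral_congr_ae (Filter.Eventually.of_forall hpt)
    have i2 : Integrable (fun z : Circle =>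
        (starRingEnd ℂ) z₀ * (Φ.eval (z : ℂ) * (starRingEnd ℂ) (Q.eval (z : ℂ)))) μ :=
      hΦQ.const_mul _
    have i3 : Integrable (fun z : Circle =>
        z₀ * ((starRingEnd ℂ) (Φ.eval (z : ℂ) * (starRingEnd ℂ) (Q.eval (z : ℂ))))) μ :=
      (hint _ (continuous_star.comp ((hc Φ).mul (hcconj Q)))).const_mul _
    have i4 : Integrable (fun z : Circle =>
        (z₀ * (starRingEnd ℂ) z₀) * (Q.eval (z : ℂ) * (starRingEnd ℂ) (Q.eval (z : ℂ)))) μ :=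
      hQQ.const_mul _
    calc ∫ z : Circle, Q.eval (z : ℂ) * (starRingEnd ℂ) (Q.eval (z : ℂ)) ∂μ
        = ∫ z : Circle, (Φ.eval (z : ℂ) * (starRingEnd ℂ) (Φ.eval (z : ℂ))
          + (starRingEnd ℂ) z₀ * (Φ.eval (z : ℂ) * (starRingEnd ℂ) (Q.eval (z : ℂ)))
          + z₀ * ((starRingEnd ℂ) (Φ.eval (z : ℂ) * (starRingEnd ℂ) (Q.eval (z : ℂ))))
          + (z₀ * (starRingEnd ℂ) z₀) * (Q.eval (z : ℂ) * (starRingEnd ℂ) (Q.eval (z : ℂ)))) ∂μ :=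
          step1
      _ = (∫ z : Circle, Φ.eval (z : ℂ) * (starRingEnd ℂ) (Φ.eval (z : ℂ)) ∂μ)
          + (starRingEnd ℂ) z₀ *
            (∫ z : Circle, Φ.eval (z : ℂ) * (starRingEnd ℂ) (Q.eval (z : ℂ)) ∂μ)
          + z₀ * (starRingEnd ℂ)
            (∫ z : Circle, Φ.eval (z : ℂ) * (starRingEnd ℂ) (Q.eval (z : ℂ)) ∂μ)
          + (z₀ * (starRingEnd ℂ) z₀) *
            ∫ z : Circle, Q.eval (z : ℂ) * (starRingEnd ℂ) (Q.eval (z : ℂ)) ∂μ := by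
          have i12 : Integrable (fun z : Circle =>
              Φ.eval (z : ℂ) * (starRingEnd ℂ) (Φ.eval (z : ℂ))
              + (starRingEnd ℂ) z₀ * (Φ.eval (z : ℂ) * (starRingEnd ℂ) (Q.eval (z : ℂ)))) μ :=
            hΦΦ.add i2
          have i123 : Integrable (fun z : Circle =>
              Φ.eval (z : ℂ) * (starRingEnd ℂ) (Φ.eval (z : ℂ))
              + (starRingEnd ℂ) z₀ * (Φ.eval (z : ℂ) * (starRingEnd ℂ) (Q.eval (z : ℂ)))
              + z₀ * ((starRingEnd ℂ) (Φ.eval (z : ℂ) * (starRingEnd ℂ) (Q.eval (z : ℂ))))) μ :=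
            i12.add i3
          rw [integral_add i123 i4, integral_add i12 i3,
            integral_add hΦΦ i2, integral_const_mul, integral_const_mul, integral_const_mul,
            integral_conj]
      _ = (∫ z : Circle, Φ.eval (z : ℂ) * (starRingEnd ℂ) (Φ.eval (z : ℂ)) ∂μ)
          + (z₀ * (starRingEnd ℂ) z₀) *
            ∫ z : Circle, Q.eval (z : ℂ) * (starRingEnd ℂ) (Q.eval (z : ℂ)) ∂μ := by
          rw [horthQ]; simp
  -- rewrite the two diagonal integrals as real integrals
  have hA : ∫ z : Circle, Φ.eval (z : ℂ) * (starRingEnd ℂ) (Φ.eval (z : ℂ)) ∂μ =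
      ((∫ z : Circle, Complex.normSq (Φ.eval (z : ℂ)) ∂μ : ℝ) : ℂ) := by
    simp_rw [Complex.mul_conj]
    exact integral_ofReal
  have hB : ∫ z : Circle, Q.eval (z : ℂ) * (starRingEnd ℂ) (Q.eval (z : ℂ)) ∂μ =
      ((∫ z : Circle, Complex.normSq (Q.eval (z : ℂ)) ∂μ : ℝ) : ℂ) := by
    simp_rw [Complex.mul_conj]
    exact integral_ofReal
  set a : ℝ := ∫ z : Circle, Complex.normSq (Φ.eval (z : ℂ)) ∂μ with ha_def
  set b : ℝ := ∫ z : Circle, Complex.normSq (Q.eval (z : ℂ)) ∂μ with hb_def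
  rw [hA, hB, Complex.mul_conj] at hmain
  have hreal : b = a + Complex.normSq z₀ * b := by exact_mod_cast hmain
  -- positivity of a
  have hb0 : 0 ≤ b := integral_nonneg fun z => Complex.normSq_nonneg _
  have ha0 : 0 ≤ a := integral_nonneg fun z => Complex.normSq_nonneg _
  have ha : 0 < a := by
    rcases ha0.lt_or_eq with h | h
    · exact h
    · exfalso
      have hzero : (fun z : Circle => Complex.normSq (Φ.eval (z : ℂ))) =ᵐ[μ] 0 :=
        (integral_eq_zero_iff_of_nonneg (fun z => Complex.normSq_nonneg _)
          (hintR _ (Complex.continuous_normSq.comp (hc Φ)))).mp h.symm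
      rw [Filter.EventuallyEq, ae_iff] at hzero
      simp only [Pi.zero_apply, Complex.normSq_eq_zero] at hzero
      -- hzero : μ {w | ¬ Φ.eval ↑w = 0} = 0
      have hroots : {w : Circle | Φ.eval (w : ℂ) = 0}.Finite := by
        have h1 : {x : ℂ | Φ.IsRoot x}.Finite := Polynomial.finite_setOf_isRoot hΦ0
        exact h1.preimage (Set.injOn_of_injective Subtype.val_injective)
      obtain ⟨zs, hzs⟩ := (hsupp.diff hroots).nonempty
      have hz1 : ∀ ε : ℝ, 0 < ε → 0 < μ (Metric.ball zs ε) := hzs.1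
      have hz2 : ¬ Φ.eval (zs : ℂ) = 0 := hzs.2
      have hopen : IsOpen {w : Circle | ¬ Φ.eval (w : ℂ) = 0} := by
        have : {w : Circle | ¬ Φ.eval (w : ℂ) = 0} =
            (fun w : Circle => Φ.eval (w : ℂ)) ⁻¹' ({0}ᶜ) := rfl
        rw [this]
        exact isOpen_compl_singleton.preimage (hc Φ)
      obtain ⟨ε, hε, hball⟩ := Metric.isOpen_iff.mp hopen zs hz2
      have : μ (Metric.ball zs ε) = 0 := measure_mono_null hball hzero
      exact (hz1 ε hε).ne' this
  -- conclude
  have hlt : Complex.normSq z₀ < 1 := by nlinarith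
  have hns : ‖z₀‖ ^ 2 = Complex.normSq z₀ := by
    rw [Complex.sq_norm]
  nlinarith [norm_nonneg z₀]
end
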